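/- Suppose (g, 𝒟) satisfies rectangle substitutes, where g: S × T → {0,1} and 𝒟 is a distribution over S × T, and Y = g(σ,τ). If a two-round protocol has Alice send μ_σ rounded to a multiple of ε and Bob reply with μ_{Sτ} rounded to a multiple of ε (call it B), then Pr[|B − g(σ,τ)| ≥ 1/2] ≤ 8ε². Hence rounding B to {0,1} computes g correctly with probability at least 1 − 8ε². -/

import Mathlib

open Finset Set

variable {Ω S T : Type*}

/-- Conditional expectation of `f` given the event `A`, for a finite outcome space
with weights `p`. -/
noncomputable def cexp [Fintype Ω] (p : Ω → ℝ) (f : Ω → ℝ) (A : Set Ω) : ℝ :=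
  (∑ ω, A.indicator (fun ω' => p ω' * f ω') ω) / (∑ ω, A.indicator p ω)

/-- Expectation of `f` with respect to the weights `p`. -/
noncomputable def pexp [Fintype Ω] (p : Ω → ℝ) (f : Ω → ℝ) : ℝ := ∑ ω, p ω * f ω

/-- `μ_{στ}(ω) = E[Y | σ, τ]`. -/
noncomputable def postBoth [Fintype Ω] (p : Ω → ℝ) (σ : Ω → S) (τ : Ω → T) (Y : Ω → ℝ)
    (ω : Ω) : ℝ :=
  cexp p Y {ω' | σ ω' = σ ω ∧ τ ω' = τ ω}

/-- `μ_σ(ω) = E[Y | σ]`. -/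
noncomputable def postSig [Fintype Ω] (p : Ω → ℝ) (σ : Ω → S) (Y : Ω → ℝ) (ω : Ω) : ℝ :=
  cexp p Y {ω' | σ ω' = σ ω}

/-- `μ_{S'τ}(ω) = E[Y | σ ∈ S', τ]`. -/
noncomputable def postSetSig [Fintype Ω] (p : Ω → ℝ) (σ : Ω → S) (τ : Ω → T) (Y : Ω → ℝ)
    (S' : Set S) (ω : Ω) : ℝ :=
  cexp p Y {ω' | σ ω' ∈ S' ∧ τ ω' = τ ω}

/-- `μ_{σT'}(ω) = E[Y | σ, τ ∈ T']`. -/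
noncomputable def postSigSet [Fintype Ω] (p : Ω → ℝ) (σ : Ω → S) (τ : Ω → T) (Y : Ω → ℝ)
    (T' : Set T) (ω : Ω) : ℝ :=
  cexp p Y {ω' | σ ω' = σ ω ∧ τ ω' ∈ T'}

/-- `μ_{S'T'} = E[Y | σ ∈ S', τ ∈ T']`. -/
noncomputable def postRect [Fintype Ω] (p : Ω → ℝ) (σ : Ω → S) (τ : Ω → T) (Y : Ω → ℝ)
    (S' : Set S) (T' : Set T) : ℝ :=
  cexp p Y {ω' | σ ω' ∈ S' ∧ τ ω' ∈ T'}

/-- The rectangle substitutes condition (with squared-error loss):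
for all `S' ⊆ S`, `T' ⊆ T`,
`E[(μ_{στ} - μ_{S'τ})² | σ ∈ S', τ ∈ T'] ≤ E[(μ_{σT'} - μ_{S'T'})² | σ ∈ S', τ ∈ T']`. -/
noncomputable def RectangleSubstitutes [Fintype Ω] (p : Ω → ℝ) (σ : Ω → S) (τ : Ω → T)
    (Y : Ω → ℝ) : Prop :=
  ∀ (S' : Set S) (T' : Set T),
    cexp p (fun ω => (postBoth p σ τ Y ω - postSetSig p σ τ Y S' ω) ^ 2)
        {ω | σ ω ∈ S' ∧ τ ω ∈ T'} ≤
      cexp p (fun ω => (postSigSet p σ τ Y T' ω - postRect p σ τ Y S' T') ^ 2)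
        {ω | σ ω ∈ S' ∧ τ ω ∈ T'}


section aux
variable [Fintype Ω] {p : Ω → ℝ}

lemma sum_indicator_filter (A : Set Ω) (f : Ω → ℝ) [DecidablePred (· ∈ A)] :
    ∑ ω, A.indicator f ω = ∑ ω ∈ Finset.univ.filter (· ∈ A), f ω := by
  rw [Finset.sum_filter]
  exact Finset.sum_congr rfl fun ω _ => by
    by_cases h : ω ∈ A <;> simp [Set.indicator_apply, h]

lemma cD_nonneg (hp : ∀ ω, 0 ≤ p ω) (A : Set Ω) : 0 ≤ ∑ ω, A.indicator p ω :=
  Finset.sum_nonneg fun ω _ => Set.indicator_nonneg (fun ω' _ => hp ω') ω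

lemma cD_pos (hp : ∀ ω, 0 ≤ p ω) {A : Set Ω} {ω0 : Ω} (h0 : ω0 ∈ A) (hpω : 0 < p ω0) :
    0 < ∑ ω, A.indicator p ω := by
  calc (0:ℝ) < p ω0 := hpω
    _ = A.indicator p ω0 := (Set.indicator_of_mem h0 p).symm
    _ ≤ ∑ ω, A.indicator p ω :=
      Finset.single_le_sum (fun ω _ => Set.indicator_nonneg (fun ω' _ => hp ω') ω)
        (Finset.mem_univ ω0)

lemma cD_eq_zero (hp : ∀ ω, 0 ≤ p ω) {A : Set Ω} (h : ∑ ω, A.indicator p ω = 0)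
    {ω0 : Ω} (h0 : ω0 ∈ A) : p ω0 = 0 := by
  have := (Finset.sum_eq_zero_iff_of_nonneg
    (fun ω _ => Set.indicator_nonneg (fun ω' _ => hp ω') ω)).1 h ω0 (Finset.mem_univ ω0)
  rwa [Set.indicator_of_mem h0] at this

lemma cexp_congr {A : Set Ω} {f g : Ω → ℝ} (h : ∀ ω ∈ A, f ω = g ω) :
    cexp p f A = cexp p g A := by
  unfold cexp
  congr 1
  refine Finset.sum_congr rfl fun ω _ => ?_
  by_cases hω : ω ∈ A
  · simp [Set.indicator_of_mem hω, h ω hω]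
  · simp [Set.indicator_of_notMem hω]

lemma cexp_const (hp : ∀ ω, 0 ≤ p ω) {A : Set Ω} {c : ℝ} {ω0 : Ω} (h0 : ω0 ∈ A)
    (hpω : 0 < p ω0) : cexp p (fun _ => c) A = c := by
  unfold cexp
  have hD : (0:ℝ) < ∑ ω, A.indicator p ω := cD_pos hp h0 hpω
  have : ∑ ω, A.indicator (fun ω' => p ω' * c) ω = c * ∑ ω, A.indicator p ω := by
    rw [Finset.mul_sum]
    refine Finset.sum_congr rfl fun ω _ => ?_
    by_cases hω : ω ∈ A
    · simp [Set.indicator_of_mem hω]; ring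
    · simp [Set.indicator_of_notMem hω]
  rw [this, mul_div_assoc, div_self hD.ne', mul_one]

lemma cexp_le_of (hp : ∀ ω, 0 ≤ p ω) {A : Set Ω} {f : Ω → ℝ} {c : ℝ} (hc : 0 ≤ c)
    (hfc : ∀ ω ∈ A, f ω ≤ c) : cexp p f A ≤ c := by
  unfold cexp
  rcases (cD_nonneg hp A).eq_or_lt with hD | hD
  · rw [← hD, div_zero]; exact hc
  · rw [div_le_iff₀ hD]
    calc ∑ ω, A.indicator (fun ω' => p ω' * f ω') ω
        ≤ ∑ ω, A.indicator (fun ω' => p ω' * c) ω := by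
          refine Finset.sum_le_sum fun ω _ => ?_
          by_cases hω : ω ∈ A
          · simp only [Set.indicator_of_mem hω]
            exact mul_le_mul_of_nonneg_left (hfc ω hω) (hp ω)
          · simp [Set.indicator_of_notMem hω]
      _ = c * ∑ ω, A.indicator p ω := by
          rw [Finset.mul_sum]
          refine Finset.sum_congr rfl fun ω _ => ?_
          by_cases hω : ω ∈ A
          · simp [Set.indicator_of_mem hω]; ring
          · simp [Set.indicator_of_notMem hω]

lemma cN_expand (A : Set Ω) (f : Ω → ℝ) (c : ℝ) :
    ∑ ω, A.indicator (fun ω' => p ω' * (f ω' - c)^2) ω =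
      (∑ ω, A.indicator (fun ω' => p ω' * f ω' ^ 2) ω)
      - 2*c*(∑ ω, A.indicator (fun ω' => p ω' * f ω') ω)
      + c^2 * (∑ ω, A.indicator p ω) := by
  rw [Finset.mul_sum, Finset.mul_sum, ← Finset.sum_sub_distrib, ← Finset.sum_add_distrib]
  refine Finset.sum_congr rfl fun ω _ => ?_
  by_cases hω : ω ∈ A
  · simp only [Set.indicator_of_mem hω]; ring
  · simp [Set.indicator_of_notMem hω]

lemma mean_min (hp : ∀ ω, 0 ≤ p ω) {A : Set Ω} (f : Ω → ℝ) (c : ℝ) :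
    cexp p (fun ω => (f ω - cexp p f A)^2) A ≤ cexp p (fun ω => (f ω - c)^2) A := by
  rcases (cD_nonneg hp A).eq_or_lt with hD | hD
  · unfold cexp; rw [← hD, div_zero, div_zero]
  · set m := cexp p f A with hm
    have hNf : ∑ ω, A.indicator (fun ω' => p ω' * f ω') ω
        = m * (∑ ω, A.indicator p ω) := by
      rw [hm]; unfold cexp; rw [div_mul_cancel₀ _ hD.ne']
    unfold cexp
    apply div_le_div_of_nonneg_right ?_ hD.le
    have e1 := cN_expand (p := p) A f m
    have e2 := cN_expand (p := p) A f c
    simp only [] at e1 e2 ⊢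
    rw [e1, e2, hNf]
    nlinarith [sq_nonneg (m - c), hD]


lemma tower (hp : ∀ ω, 0 ≤ p ω) (Y : Ω → ℝ) (σ : Ω → S) (val : S → ℝ)
    (hval : ∀ s, val s = cexp p Y {ω' | σ ω' = s}) (S' : Set S) :
    cexp p Y {ω | σ ω ∈ S'} = cexp p (fun ω => val (σ ω)) {ω | σ ω ∈ S'} := by
  classical
  have fiber : ∀ s : S, ∑ ω ∈ Finset.univ.filter (fun ω => σ ω = s), p ω * Y ω
      = val s * ∑ ω ∈ Finset.univ.filter (fun ω => σ ω = s), p ω := by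
    intro s
    have hfilter : Finset.univ.filter (· ∈ {ω' | σ ω' = s})
        = Finset.univ.filter (fun ω => σ ω = s) := by
      ext ω; simp [Set.mem_setOf_eq]
    have hvs : val s = (∑ ω ∈ Finset.univ.filter (fun ω => σ ω = s), p ω * Y ω)
        / (∑ ω ∈ Finset.univ.filter (fun ω => σ ω = s), p ω) := by
      rw [hval s]; unfold cexp
      rw [sum_indicator_filter, sum_indicator_filter, hfilter]
    rcases eq_or_ne (∑ ω ∈ Finset.univ.filter (fun ω => σ ω = s), p ω) 0 with h0 | h0
    · rw [h0, mul_zero]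
      refine Finset.sum_eq_zero fun ω hω => ?_
      have : p ω = 0 := (Finset.sum_eq_zero_iff_of_nonneg (fun ω _ => hp ω)).1 h0 ω hω
      rw [this, zero_mul]
    · rw [hvs, div_mul_cancel₀ _ h0]
  unfold cexp
  congr 1
  rw [sum_indicator_filter, sum_indicator_filter]
  rw [← Finset.sum_fiberwise_of_maps_to (g := σ) (t := Finset.univ.image σ)
      (fun x _ => Finset.mem_image_of_mem σ (Finset.mem_univ x)) _,
    ← Finset.sum_fiberwise_of_maps_to (g := σ) (t := Finset.univ.image σ)
      (fun x _ => Finset.mem_image_of_mem σ (Finset.mem_univ x)) _]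
  refine Finset.sum_congr rfl fun s _ => ?_
  by_cases hsS : s ∈ S'
  · have hfe : (Finset.univ.filter (· ∈ {ω | σ ω ∈ S'})).filter (fun ω => σ ω = s)
        = Finset.univ.filter (fun ω => σ ω = s) := by
      ext ω
      simp only [Finset.mem_filter, Finset.mem_univ, true_and, Set.mem_setOf_eq]
      exact ⟨fun h => h.2, fun h => ⟨h ▸ hsS, h⟩⟩
    rw [hfe, fiber s]
    have hc : ∑ ω ∈ Finset.univ.filter (fun ω => σ ω = s), p ω * val (σ ω)
        = ∑ ω ∈ Finset.univ.filter (fun ω => σ ω = s), p ω * val s :=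
      Finset.sum_congr rfl fun ω hω => by rw [(Finset.mem_filter.1 hω).2]
    rw [hc, ← Finset.sum_mul, mul_comm]
  · have hfe : (Finset.univ.filter (· ∈ {ω | σ ω ∈ S'})).filter (fun ω => σ ω = s)
        = (∅ : Finset Ω) := by
      ext ω
      simp only [Finset.mem_filter, Finset.mem_univ, true_and, Set.mem_setOf_eq,
        Finset.notMem_empty, iff_false, not_and]
      intro h1 h2; exact hsS (h2 ▸ h1)
    rw [hfe]
    simp


end aux

/-- Communication-complexity corollary: if `(g, 𝒟)` satisfies rectangle substitutes,
`Y = g(σ,τ) ∈ {0,1}`, Alice sends `μ_σ` rounded to the nearest multiple of `ε`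
(determining the rectangle of signals `Sε ω`) and Bob replies with `μ_{Sτ}` rounded
to the nearest multiple of `ε` (call it `B`), then
`Pr[|B - g(σ,τ)| ≥ 1/2] ≤ 8 ε²`. -/
theorem protocol_computes_g
    [Fintype Ω] (p : Ω → ℝ) (hp : ∀ ω, 0 ≤ p ω) (hp1 : ∑ ω, p ω = 1)
    (σ : Ω → S) (τ : Ω → T)
    (g : S → T → ℝ) (hg : ∀ s t, g s t = 0 ∨ g s t = 1)
    (Y : Ω → ℝ) (hYg : ∀ ω, Y ω = g (σ ω) (τ ω))
    (hRS : RectangleSubstitutes p σ τ Y)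
    (ε : ℝ) (hε : 0 < ε)
    (val : S → ℝ) (hval : ∀ s, val s = cexp p Y {ω' | σ ω' = s})
    (Sε : Ω → Set S)
    (hSε : ∀ ω, Sε ω = {s | round (val s / ε) = round (val (σ ω) / ε)})
    (B : Ω → ℝ)
    (hB : ∀ ω, B ω = ε * round (postSetSig p σ τ Y (Sε ω) ω / ε)) :
    (∑ ω, ({ω' | (1:ℝ)/2 ≤ |B ω' - g (σ ω') (τ ω')|}.indicator p) ω) ≤ 8 * ε ^ 2 := by
  classical
  set F : Ω → ℝ := fun ω => (postBoth p σ τ Y ω - postSetSig p σ τ Y (Sε ω) ω)^2 with hF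
  -- Step 1: main expectation bound
  have hEf : ∑ ω, p ω * F ω ≤ ε^2/4 := by
    set m : Ω → ℤ := fun ω => round (val (σ ω) / ε) with hm
    have hmaps : ∀ x ∈ Finset.univ (α := Ω), m x ∈ Finset.univ.image m :=
      fun x _ => Finset.mem_image_of_mem m (Finset.mem_univ x)
    have hgroup : ∑ ω, p ω * F ω
        = ∑ k ∈ Finset.univ.image m,
            ∑ ω ∈ Finset.univ.filter (fun ω => m ω = k), p ω * F ω :=
      (Finset.sum_fiberwise_of_maps_to hmaps _).symm
    have hgroupP : (1:ℝ)
        = ∑ k ∈ Finset.univ.image m,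
            ∑ ω ∈ Finset.univ.filter (fun ω => m ω = k), p ω := by
      rw [← hp1]; exact (Finset.sum_fiberwise_of_maps_to hmaps _).symm
    have key : ∀ k ∈ Finset.univ.image m,
        ∑ ω ∈ Finset.univ.filter (fun ω => m ω = k), p ω * F ω
          ≤ ε^2/4 * ∑ ω ∈ Finset.univ.filter (fun ω => m ω = k), p ω := by
      intro k _
      set Sk : Set S := {s | round (val s / ε) = k} with hSk
      set Ak : Set Ω := {ω | σ ω ∈ Sk} with hAk
      have hfilterAk : Finset.univ.filter (fun ω => m ω = k)
          = Finset.univ.filter (· ∈ Ak) := by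
        ext ω
        simp only [Finset.mem_filter, Finset.mem_univ, true_and, hAk, hSk, hm,
          Set.mem_setOf_eq]
      have hFk : ∀ ω ∈ Ak, F ω
          = (postBoth p σ τ Y ω - postSetSig p σ τ Y Sk ω)^2 := by
        intro ω hω
        have : Sε ω = Sk := by
          rw [hSε ω, hSk]
          have : round (val (σ ω) / ε) = k := hω
          rw [this]
        rw [hF]; simp only []; rw [this]
      -- fiber sum as indicator sums
      rw [hfilterAk, ← sum_indicator_filter Ak (fun ω => p ω * F ω),
        ← sum_indicator_filter Ak p]
      have hD0 := cD_nonneg (p := p) hp Ak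
      rcases hD0.eq_or_lt with hD | hD
      · have hz : ∑ ω, Ak.indicator (fun ω' => p ω' * F ω') ω = 0 := by
          refine Finset.sum_eq_zero fun ω _ => ?_
          by_cases hω : ω ∈ Ak
          · rw [Set.indicator_of_mem hω, cD_eq_zero hp hD.symm hω, zero_mul]
          · exact Set.indicator_of_notMem hω _
        rw [hz, ← hD, mul_zero]
      · -- positive mass rectangle
        have hcexpFk : cexp p F Ak ≤ ε^2/4 := by
          have hcongr : cexp p F Ak
              = cexp p (fun ω => (postBoth p σ τ Y ω - postSetSig p σ τ Y Sk ω)^2) Ak :=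
            cexp_congr hFk
          have hRS' := hRS Sk Set.univ
          have hsetr : {ω | σ ω ∈ Sk ∧ τ ω ∈ Set.univ} = Ak := by
            ext ω; simp [hAk]
          rw [hsetr] at hRS'
          -- rewrite RHS of RS
          have hps : ∀ ω, postSigSet p σ τ Y Set.univ ω = val (σ ω) := by
            intro ω
            unfold postSigSet
            rw [hval (σ ω)]
            congr 1
            ext ω'; simp
          have hpr : postRect p σ τ Y Sk Set.univ
              = cexp p (fun ω => val (σ ω)) Ak := by
            unfold postRect
            have : {ω' | σ ω' ∈ Sk ∧ τ ω' ∈ Set.univ} = Ak := by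
              ext ω'; simp [hAk]
            rw [this, hAk]
            exact tower hp Y σ val hval Sk
          have hRS'' : cexp p (fun ω => (postBoth p σ τ Y ω - postSetSig p σ τ Y Sk ω)^2) Ak
              ≤ cexp p (fun ω =>
                  (val (σ ω) - cexp p (fun ω' => val (σ ω')) Ak)^2) Ak := by
            refine hRS'.trans_eq (cexp_congr fun ω _ => ?_)
            rw [hps ω, hpr]
          have hmin := mean_min (p := p) hp (A := Ak) (fun ω => val (σ ω)) ((k : ℝ) * ε)
          have hbound : cexp p (fun ω => (val (σ ω) - (k : ℝ) * ε)^2) Ak ≤ ε^2/4 := by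
            refine cexp_le_of hp (by positivity) fun ω hω => ?_
            have hk : round (val (σ ω) / ε) = k := hω
            have habs : |val (σ ω) / ε - (k : ℝ)| ≤ 1/2 := by
              rw [← hk]; exact abs_sub_round _
            have h1 := abs_le.1 habs
            have hval_eq : val (σ ω) = ε * (val (σ ω) / ε - k) + k * ε := by
              field_simp
              ring
            rw [hval_eq]
            have hd : (val (σ ω) / ε - (k:ℝ))^2 ≤ 1/4 := by nlinarith [h1.1, h1.2]
            have hm2 := mul_le_mul_of_nonneg_left hd (sq_nonneg ε)
            nlinarith [hm2]
          calc cexp p F Ak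
              = _ := hcongr
            _ ≤ _ := hRS''
            _ ≤ _ := hmin
            _ ≤ ε^2/4 := hbound
        have hNc : ∑ ω, Ak.indicator (fun ω' => p ω' * F ω') ω
            = cexp p F Ak * (∑ ω, Ak.indicator p ω) := by
          unfold cexp; rw [div_mul_cancel₀ _ hD.ne']
        rw [hNc]
        exact mul_le_mul_of_nonneg_right hcexpFk hD0
    calc ∑ ω, p ω * F ω
        = _ := hgroup
      _ ≤ ∑ k ∈ Finset.univ.image m,
            ε^2/4 * ∑ ω ∈ Finset.univ.filter (fun ω => m ω = k), p ω :=
          Finset.sum_le_sum key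
      _ = ε^2/4 * (1:ℝ) := by rw [hgroupP, Finset.mul_sum]
      _ = ε^2/4 := mul_one _
  -- Step 2: pointwise bound
  have hpt : ∀ ω, ({ω' | (1:ℝ)/2 ≤ |B ω' - g (σ ω') (τ ω')|}.indicator p) ω
      ≤ 8 * (p ω * F ω) + 2*ε^2 * p ω := by
    intro ω
    have hFnn : 0 ≤ F ω := by rw [hF]; positivity
    by_cases hbad : ω ∈ {ω' | (1:ℝ)/2 ≤ |B ω' - g (σ ω') (τ ω')|}
    · rw [Set.indicator_of_mem hbad]
      rcases (hp ω).eq_or_lt with hp0 | hp0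
      · rw [← hp0]; nlinarith
      · have hbad' : (1:ℝ)/2 ≤ |B ω - g (σ ω) (τ ω)| := hbad
        set G := g (σ ω) (τ ω) with hG
        set x := postSetSig p σ τ Y (Sε ω) ω with hx
        have hBoth : postBoth p σ τ Y ω = G := by
          unfold postBoth
          rw [cexp_congr (g := fun _ => G) (fun ω' hω' => by
            rw [hYg ω', hω'.1, hω'.2])]
          exact cexp_const hp (show ω ∈ {ω' | σ ω' = σ ω ∧ τ ω' = τ ω} from ⟨rfl, rfl⟩) hp0
        have hFω : F ω = (G - x)^2 := by rw [hF]; simp only []; rw [hBoth]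
        have hBx : |B ω - x| ≤ ε/2 := by
          rw [hB ω]
          have h1 : |x/ε - (round (x/ε) : ℝ)| ≤ 1/2 := abs_sub_round _
          have h2 : ε * (round (x/ε) : ℝ) - x = -(ε * (x/ε - (round (x/ε) : ℝ))) := by
            field_simp
            ring
          rw [h2, abs_neg, abs_mul, abs_of_pos hε]
          nlinarith [h1]
        have h2 : (1:ℝ)/4 ≤ (B ω - G)^2 := by
          nlinarith [hbad', abs_nonneg (B ω - G), sq_abs (B ω - G)]
        have h3 : (B ω - x)^2 ≤ ε^2/4 := by
          nlinarith [hBx, abs_nonneg (B ω - x), sq_abs (B ω - x)]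
        have hkey : (1:ℝ) ≤ 8 * F ω + 2*ε^2 := by
          rw [hFω]
          nlinarith [h2, h3, sq_nonneg ((B ω - x) - (x - G))]
        nlinarith [mul_le_mul_of_nonneg_left hkey (hp ω)]
    · rw [Set.indicator_of_notMem hbad]
      nlinarith [hp ω, hFnn, sq_nonneg ε, mul_nonneg (hp ω) hFnn]
  -- Step 3: combine
  calc ∑ ω, ({ω' | (1:ℝ)/2 ≤ |B ω' - g (σ ω') (τ ω')|}.indicator p) ω
      ≤ ∑ ω, (8 * (p ω * F ω) + 2*ε^2 * p ω) := Finset.sum_le_sum fun ω _ => hpt ω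
    _ = 8 * (∑ ω, p ω * F ω) + 2*ε^2 * ∑ ω, p ω := by
        rw [Finset.sum_add_distrib, ← Finset.mul_sum, ← Finset.mul_sum]
    _ ≤ 8 * (ε^2/4) + 2*ε^2 * 1 := by
        rw [hp1]
        have : 8 * (∑ ω, p ω * F ω) ≤ 8 * (ε^2/4) := by linarith
        linarith
    _ ≤ 8 * ε^2 := by nlinarith [sq_nonneg ε]
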